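/- Let a, b > 0 and t > 2b + a be real numbers and k ≥ 2 an integer. Define p_{b,t} ∈ ℝ[x,y,z] by p_{b,t} = b²·x²y² + b·x²yz + x²z² + b²·xy²z + b²·y²z² + t·xyz². Let q ∈ ℝ[x,y] be homogeneous of degree k with coefficient 1 on x^k, coefficient a on x^{k−1}y, and nonnegative coefficient c on x^{k−2}y². Then p_{b,t} is ADLC, but p_{b,t}·q is not ADLC: the coefficients of x^{k+2}y², x^{k+1}y²z, and x^k y²z² in p_{b,t}·q equal b², b²+ab, and b²+at+c respectively, and (b²+ab)² < b²·(b²+at+c). -/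

import Mathlib

open Finset MvPolynomial

/-- The coefficient of a polynomial at an integer exponent vector: the usual
coefficient if all coordinates are nonnegative, and `0` otherwise. -/
noncomputable def coeffZ {m : ℕ} (h : MvPolynomial (Fin m) ℝ) (mu : Fin m → ℤ) : ℝ :=
  if H : ∀ k, 0 ≤ mu k then
    h.coeff (Finsupp.equivFunOnFinite.symm fun k => (mu k).toNat)
  else 0

/-- A polynomial is discretely log-concave in type `A` root directions (ADLC)
if `c_μ² ≥ c_{μ+e_i-e_j} · c_{μ-e_i+e_j}` for all `μ ∈ ℕ^m` and `i, j`, where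
coefficients indexed outside `ℕ^m` are read as `0`. -/
noncomputable def ADLC {m : ℕ} (h : MvPolynomial (Fin m) ℝ) : Prop :=
  ∀ (mu : Fin m → ℕ) (i j : Fin m),
    coeffZ h ((fun k => (mu k : ℤ)) + Pi.single i 1 - Pi.single j 1) *
        coeffZ h ((fun k => (mu k : ℤ)) - Pi.single i 1 + Pi.single j 1)
      ≤ h.coeff (Finsupp.equivFunOnFinite.symm mu) ^ 2

set_option maxHeartbeats 4000000

/-- Auxiliary: the polynomial `p_{b,t}`. -/
noncomputable def Pbt (b t : ℝ) : MvPolynomial (Fin 3) ℝ :=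
  C (b ^ 2) * X 0 ^ 2 * X 1 ^ 2 + C b * X 0 ^ 2 * X 1 * X 2 +
    X 0 ^ 2 * X 2 ^ 2 + C (b ^ 2) * X 0 * X 1 ^ 2 * X 2 +
    C (b ^ 2) * X 1 ^ 2 * X 2 ^ 2 + C t * X 0 * X 1 * X 2 ^ 2

/-- Auxiliary: the coefficient function of `p_{b,t}` on `ℤ³`. -/
noncomputable def Fz (b t : ℝ) (x y z : ℤ) : ℝ :=
  (if x = 2 ∧ y = 2 ∧ z = 0 then b^2 else 0) +
  (if x = 2 ∧ y = 1 ∧ z = 1 then b else 0) +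
  (if x = 2 ∧ y = 0 ∧ z = 2 then 1 else 0) +
  (if x = 1 ∧ y = 2 ∧ z = 1 then b^2 else 0) +
  (if x = 0 ∧ y = 2 ∧ z = 2 then b^2 else 0) +
  (if x = 1 ∧ y = 1 ∧ z = 2 then t else 0)

lemma Pbt_eq (b t : ℝ) :
    Pbt b t =
    monomial (Finsupp.single 0 2 + Finsupp.single 1 2) (b^2) +
    monomial (Finsupp.single 0 2 + Finsupp.single 1 1 + Finsupp.single 2 1) b +
    monomial (Finsupp.single 0 2 + Finsupp.single 2 2) 1 +
    monomial (Finsupp.single 0 1 + Finsupp.single 1 2 + Finsupp.single 2 1) (b^2) +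
    monomial (Finsupp.single 1 2 + Finsupp.single 2 2) (b^2) +
    monomial (Finsupp.single 0 1 + Finsupp.single 1 1 + Finsupp.single 2 2) t := by
  have hX : ∀ n : Fin 3, (X n : MvPolynomial (Fin 3) ℝ) = monomial (Finsupp.single n 1) 1 :=
    fun n => rfl
  unfold Pbt
  simp only [X_pow_eq_monomial]
  simp only [hX, C_apply, monomial_mul, mul_one, one_mul, zero_add]

lemma eq_iff3 (s m : Fin 3 →₀ ℕ) :
    s = m ↔ ((m 0 : ℤ) = s 0 ∧ (m 1 : ℤ) = s 1 ∧ (m 2 : ℤ) = s 2) := by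
  constructor
  · rintro rfl; exact ⟨rfl, rfl, rfl⟩
  · rintro ⟨h0, h1, h2⟩
    ext k
    fin_cases k
    · exact_mod_cast h0.symm
    · exact_mod_cast h1.symm
    · exact_mod_cast h2.symm

lemma coeff_Pbt (b t : ℝ) (m : Fin 3 →₀ ℕ) :
    coeff m (Pbt b t) = Fz b t (m 0) (m 1) (m 2) := by
  rw [Pbt_eq]
  simp only [coeff_add, coeff_monomial, eq_iff3, Finsupp.add_apply, Finsupp.single_apply]
  norm_num [Fz, Finsupp.single_apply]

lemma Fz_cases (b t : ℝ) (x y z : ℤ) :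
    (Fz b t x y z = 0 ∧ ¬(x=2∧y=2∧z=0) ∧ ¬(x=2∧y=1∧z=1) ∧ ¬(x=2∧y=0∧z=2) ∧
      ¬(x=1∧y=2∧z=1) ∧ ¬(x=0∧y=2∧z=2) ∧ ¬(x=1∧y=1∧z=2)) ∨
    ((x=2∧y=2∧z=0) ∧ Fz b t x y z = b^2) ∨
    ((x=2∧y=1∧z=1) ∧ Fz b t x y z = b) ∨
    ((x=2∧y=0∧z=2) ∧ Fz b t x y z = 1) ∨
    ((x=1∧y=2∧z=1) ∧ Fz b t x y z = b^2) ∨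
    ((x=0∧y=2∧z=2) ∧ Fz b t x y z = b^2) ∨
    ((x=1∧y=1∧z=2) ∧ Fz b t x y z = t) := by
  by_cases h1 : x=2∧y=2∧z=0
  · obtain ⟨rfl, rfl, rfl⟩ := h1
    exact Or.inr (Or.inl ⟨⟨rfl, rfl, rfl⟩, by norm_num [Fz]⟩)
  by_cases h2 : x=2∧y=1∧z=1
  · obtain ⟨rfl, rfl, rfl⟩ := h2
    exact Or.inr (Or.inr (Or.inl ⟨⟨rfl, rfl, rfl⟩, by norm_num [Fz]⟩))
  by_cases h3 : x=2∧y=0∧z=2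
  · obtain ⟨rfl, rfl, rfl⟩ := h3
    exact Or.inr (Or.inr (Or.inr (Or.inl ⟨⟨rfl, rfl, rfl⟩, by norm_num [Fz]⟩)))
  by_cases h4 : x=1∧y=2∧z=1
  · obtain ⟨rfl, rfl, rfl⟩ := h4
    exact Or.inr (Or.inr (Or.inr (Or.inr (Or.inl ⟨⟨rfl, rfl, rfl⟩, by norm_num [Fz]⟩))))
  by_cases h5 : x=0∧y=2∧z=2
  · obtain ⟨rfl, rfl, rfl⟩ := h5
    exact Or.inr (Or.inr (Or.inr (Or.inr (Or.inr (Or.inl ⟨⟨rfl, rfl, rfl⟩, by norm_num [Fz]⟩)))))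
  by_cases h6 : x=1∧y=1∧z=2
  · obtain ⟨rfl, rfl, rfl⟩ := h6
    exact Or.inr (Or.inr (Or.inr (Or.inr (Or.inr (Or.inr ⟨⟨rfl, rfl, rfl⟩, by norm_num [Fz]⟩)))))
  · exact Or.inl ⟨by
      unfold Fz
      rw [if_neg h1, if_neg h2, if_neg h3, if_neg h4, if_neg h5, if_neg h6]
      norm_num, h1, h2, h3, h4, h5, h6⟩

lemma key (b t : ℝ) (hb : 0 < b) (hbt : b ≤ t) (x0 x1 x2 : ℕ) (s0 s1 s2 r0 r1 r2 : ℤ)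
    (hs0 : 0 ≤ s0) (hs0' : s0 ≤ 1) (hs1 : 0 ≤ s1) (hs1' : s1 ≤ 1) (hs2 : 0 ≤ s2) (hs2' : s2 ≤ 1)
    (hss : s0 + s1 + s2 = 1)
    (hr0 : 0 ≤ r0) (hr0' : r0 ≤ 1) (hr1 : 0 ≤ r1) (hr1' : r1 ≤ 1) (hr2 : 0 ≤ r2) (hr2' : r2 ≤ 1)
    (hrr : r0 + r1 + r2 = 1) :
    Fz b t ((x0:ℤ) + s0 - r0) ((x1:ℤ) + s1 - r1) ((x2:ℤ) + s2 - r2) *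
      Fz b t ((x0:ℤ) - s0 + r0) ((x1:ℤ) - s1 + r1) ((x2:ℤ) - s2 + r2)
    ≤ Fz b t (x0:ℤ) (x1:ℤ) (x2:ℤ) ^ 2 := by
  rcases Fz_cases b t ((x0:ℤ) + s0 - r0) ((x1:ℤ) + s1 - r1) ((x2:ℤ) + s2 - r2) with
    ⟨hv1, hn1⟩ | ⟨hc1, hv1⟩ | ⟨hc1, hv1⟩ | ⟨hc1, hv1⟩ | ⟨hc1, hv1⟩ | ⟨hc1, hv1⟩ | ⟨hc1, hv1⟩ <;>
  rcases Fz_cases b t ((x0:ℤ) - s0 + r0) ((x1:ℤ) - s1 + r1) ((x2:ℤ) - s2 + r2) with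
    ⟨hv2, hn2⟩ | ⟨hc2, hv2⟩ | ⟨hc2, hv2⟩ | ⟨hc2, hv2⟩ | ⟨hc2, hv2⟩ | ⟨hc2, hv2⟩ | ⟨hc2, hv2⟩ <;>
  first
    | (exfalso; omega)
    | (rw [hv1, zero_mul]; positivity)
    | (rw [hv2, mul_zero]; positivity)
    | (rcases Fz_cases b t (x0:ℤ) (x1:ℤ) (x2:ℤ) with
        ⟨hv3, hn3⟩ | ⟨hc3, hv3⟩ | ⟨hc3, hv3⟩ | ⟨hc3, hv3⟩ | ⟨hc3, hv3⟩ | ⟨hc3, hv3⟩ | ⟨hc3, hv3⟩ <;>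
      rw [hv1, hv2, hv3] <;>
      first
        | (exfalso; omega)
        | nlinarith [hb, hbt, sq_nonneg b, sq_nonneg t, mul_pos hb hb])

lemma single_nonneg3 (i k : Fin 3) : 0 ≤ (Pi.single i 1 : Fin 3 → ℤ) k := by
  rcases eq_or_ne k i with rfl | h
  · simp
  · simp [Pi.single_eq_of_ne h]

lemma single_le_one3 (i k : Fin 3) : (Pi.single i 1 : Fin 3 → ℤ) k ≤ 1 := by
  rcases eq_or_ne k i with rfl | h
  · simp
  · simp [Pi.single_eq_of_ne h]

lemma single_sum3 (i : Fin 3) :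
    (Pi.single i 1 : Fin 3 → ℤ) 0 + (Pi.single i 1 : Fin 3 → ℤ) 1 +
      (Pi.single i 1 : Fin 3 → ℤ) 2 = 1 := by
  fin_cases i <;> norm_num [Pi.single_apply] <;> decide

lemma coeffZ_Pbt (b t : ℝ) (nu : Fin 3 → ℤ) :
    coeffZ (Pbt b t) nu = Fz b t (nu 0) (nu 1) (nu 2) := by
  unfold coeffZ
  split_ifs with H
  · rw [coeff_Pbt]
    simp only [Finsupp.coe_equivFunOnFinite_symm]
    rw [Int.toNat_of_nonneg (H 0), Int.toNat_of_nonneg (H 1), Int.toNat_of_nonneg (H 2)]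
  · push_neg at H
    obtain ⟨k, hk⟩ := H
    rcases Fz_cases b t (nu 0) (nu 1) (nu 2) with
      ⟨hv, -⟩ | ⟨hc, hv⟩ | ⟨hc, hv⟩ | ⟨hc, hv⟩ | ⟨hc, hv⟩ | ⟨hc, hv⟩ | ⟨hc, hv⟩
    · exact hv.symm
    all_goals {
      exfalso
      have h0 : 0 ≤ nu 0 := by omega
      have h1 : 0 ≤ nu 1 := by omega
      have h2 : 0 ≤ nu 2 := by omega
      have hall : ∀ k, 0 ≤ nu k := by intro k; fin_cases k; exacts [h0, h1, h2]
      exact absurd (hall k) (not_le.mpr hk) }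

lemma ADLC_Pbt (b t : ℝ) (hb : 0 < b) (hbt : b ≤ t) : ADLC (Pbt b t) := by
  intro mu i j
  rw [coeffZ_Pbt, coeffZ_Pbt, coeff_Pbt]
  simp only [Finsupp.coe_equivFunOnFinite_symm, Pi.add_apply, Pi.sub_apply]
  exact key b t hb hbt (mu 0) (mu 1) (mu 2) _ _ _ _ _ _
    (single_nonneg3 i 0) (single_le_one3 i 0) (single_nonneg3 i 1) (single_le_one3 i 1)
    (single_nonneg3 i 2) (single_le_one3 i 2) (single_sum3 i)
    (single_nonneg3 j 0) (single_le_one3 j 0) (single_nonneg3 j 1) (single_le_one3 j 1)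
    (single_nonneg3 j 2) (single_le_one3 j 2) (single_sum3 j)

section Coeffs

variable (b t : ℝ) (k : ℕ) (q : MvPolynomial (Fin 3) ℝ)

lemma coeff_mul_one (hk : 2 ≤ k)
    (hz : ∀ m : Fin 3 →₀ ℕ, m 2 ≠ 0 → q.coeff m = 0)
    (hq0 : q.coeff (Finsupp.single 0 k) = 1) :
    coeff (Finsupp.single 0 (k + 2) + Finsupp.single 1 2) (Pbt b t * q) = b ^ 2 := by
  rw [Pbt_eq, add_mul, add_mul, add_mul, add_mul, add_mul]
  simp only [coeff_add, coeff_monomial_mul']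
  have c1 : (Finsupp.single (0:Fin 3) 2 + Finsupp.single 1 2) ≤
      Finsupp.single 0 (k+2) + Finsupp.single 1 2 := by
    rw [Finsupp.le_def]; intro k'; fin_cases k' <;>
      simp (config := { decide := true }) [Finsupp.add_apply, Finsupp.single_apply]
  rw [if_pos c1]
  have e1 : (Finsupp.single (0:Fin 3) (k+2) + Finsupp.single 1 2) -
      (Finsupp.single 0 2 + Finsupp.single 1 2) = Finsupp.single 0 k := by
    ext k'; fin_cases k' <;>
      simp (config := { decide := true })
        [Finsupp.tsub_apply, Finsupp.add_apply, Finsupp.single_apply]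
  rw [e1, hq0]
  have c2 : ¬ (Finsupp.single (0:Fin 3) 2 + Finsupp.single 1 1 + Finsupp.single 2 1) ≤
      Finsupp.single 0 (k+2) + Finsupp.single 1 2 := by
    intro hle
    have := Finsupp.le_def.mp hle 2
    simp (config := { decide := true }) [Finsupp.add_apply, Finsupp.single_apply] at this
  have c3 : ¬ (Finsupp.single (0:Fin 3) 2 + Finsupp.single 2 2) ≤
      Finsupp.single 0 (k+2) + Finsupp.single 1 2 := by
    intro hle
    have := Finsupp.le_def.mp hle 2
    simp (config := { decide := true }) [Finsupp.add_apply, Finsupp.single_apply] at this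
  have c4 : ¬ (Finsupp.single (0:Fin 3) 1 + Finsupp.single 1 2 + Finsupp.single 2 1) ≤
      Finsupp.single 0 (k+2) + Finsupp.single 1 2 := by
    intro hle
    have := Finsupp.le_def.mp hle 2
    simp (config := { decide := true }) [Finsupp.add_apply, Finsupp.single_apply] at this
  have c5 : ¬ (Finsupp.single (1:Fin 3) 2 + Finsupp.single 2 2) ≤
      Finsupp.single 0 (k+2) + Finsupp.single 1 2 := by
    intro hle
    have := Finsupp.le_def.mp hle 2
    simp (config := { decide := true }) [Finsupp.add_apply, Finsupp.single_apply] at this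
  have c6 : ¬ (Finsupp.single (0:Fin 3) 1 + Finsupp.single 1 1 + Finsupp.single 2 2) ≤
      Finsupp.single 0 (k+2) + Finsupp.single 1 2 := by
    intro hle
    have := Finsupp.le_def.mp hle 2
    simp (config := { decide := true }) [Finsupp.add_apply, Finsupp.single_apply] at this
  rw [if_neg c2, if_neg c3, if_neg c4, if_neg c5, if_neg c6]
  ring

lemma coeff_mul_two (hk : 2 ≤ k) (a : ℝ)
    (hz : ∀ m : Fin 3 →₀ ℕ, m 2 ≠ 0 → q.coeff m = 0)
    (hq0 : q.coeff (Finsupp.single 0 k) = 1)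
    (hq1 : q.coeff (Finsupp.single 0 (k - 1) + Finsupp.single 1 1) = a) :
    coeff (Finsupp.single 0 (k + 1) + Finsupp.single 1 2 + Finsupp.single 2 1)
      (Pbt b t * q) = b ^ 2 + a * b := by
  rw [Pbt_eq, add_mul, add_mul, add_mul, add_mul, add_mul]
  simp only [coeff_add, coeff_monomial_mul']
  have c1 : (Finsupp.single (0:Fin 3) 2 + Finsupp.single 1 2) ≤
      Finsupp.single 0 (k+1) + Finsupp.single 1 2 + Finsupp.single 2 1 := by
    rw [Finsupp.le_def]; intro k'; fin_cases k' <;>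
      simp (config := { decide := true }) [Finsupp.add_apply, Finsupp.single_apply] <;> omega
  have e1 : (Finsupp.single (0:Fin 3) (k+1) + Finsupp.single 1 2 + Finsupp.single 2 1) -
      (Finsupp.single 0 2 + Finsupp.single 1 2) =
      Finsupp.single 0 (k-1) + Finsupp.single 2 1 := by
    ext k'; fin_cases k' <;>
      simp (config := { decide := true })
        [Finsupp.tsub_apply, Finsupp.add_apply, Finsupp.single_apply] <;> omega
  have z1 : q.coeff (Finsupp.single 0 (k-1) + Finsupp.single 2 1) = 0 := by
    apply hz
    simp (config := { decide := true }) [Finsupp.add_apply, Finsupp.single_apply]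
  rw [if_pos c1, e1, z1]
  have c2 : (Finsupp.single (0:Fin 3) 2 + Finsupp.single 1 1 + Finsupp.single 2 1) ≤
      Finsupp.single 0 (k+1) + Finsupp.single 1 2 + Finsupp.single 2 1 := by
    rw [Finsupp.le_def]; intro k'; fin_cases k' <;>
      simp (config := { decide := true }) [Finsupp.add_apply, Finsupp.single_apply] <;> omega
  have e2 : (Finsupp.single (0:Fin 3) (k+1) + Finsupp.single 1 2 + Finsupp.single 2 1) -
      (Finsupp.single 0 2 + Finsupp.single 1 1 + Finsupp.single 2 1) =
      Finsupp.single 0 (k-1) + Finsupp.single 1 1 := by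
    ext k'; fin_cases k' <;>
      simp (config := { decide := true })
        [Finsupp.tsub_apply, Finsupp.add_apply, Finsupp.single_apply] <;> omega
  rw [if_pos c2, e2, hq1]
  have c3 : ¬ (Finsupp.single (0:Fin 3) 2 + Finsupp.single 2 2) ≤
      Finsupp.single 0 (k+1) + Finsupp.single 1 2 + Finsupp.single 2 1 := by
    intro hle
    have := Finsupp.le_def.mp hle 2
    simp (config := { decide := true }) [Finsupp.add_apply, Finsupp.single_apply] at this
  have c4 : (Finsupp.single (0:Fin 3) 1 + Finsupp.single 1 2 + Finsupp.single 2 1) ≤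
      Finsupp.single 0 (k+1) + Finsupp.single 1 2 + Finsupp.single 2 1 := by
    rw [Finsupp.le_def]; intro k'; fin_cases k' <;>
      simp (config := { decide := true }) [Finsupp.add_apply, Finsupp.single_apply] <;> omega
  have e4 : (Finsupp.single (0:Fin 3) (k+1) + Finsupp.single 1 2 + Finsupp.single 2 1) -
      (Finsupp.single 0 1 + Finsupp.single 1 2 + Finsupp.single 2 1) =
      Finsupp.single 0 k := by
    ext k'; fin_cases k' <;>
      simp (config := { decide := true })
        [Finsupp.tsub_apply, Finsupp.add_apply, Finsupp.single_apply] <;> omega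
  rw [if_neg c3, if_pos c4, e4, hq0]
  have c5 : ¬ (Finsupp.single (1:Fin 3) 2 + Finsupp.single 2 2) ≤
      Finsupp.single 0 (k+1) + Finsupp.single 1 2 + Finsupp.single 2 1 := by
    intro hle
    have := Finsupp.le_def.mp hle 2
    simp (config := { decide := true }) [Finsupp.add_apply, Finsupp.single_apply] at this
  have c6 : ¬ (Finsupp.single (0:Fin 3) 1 + Finsupp.single 1 1 + Finsupp.single 2 2) ≤
      Finsupp.single 0 (k+1) + Finsupp.single 1 2 + Finsupp.single 2 1 := by
    intro hle
    have := Finsupp.le_def.mp hle 2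
    simp (config := { decide := true }) [Finsupp.add_apply, Finsupp.single_apply] at this
  rw [if_neg c5, if_neg c6]
  ring

lemma coeff_mul_three (hk : 2 ≤ k) (a c : ℝ)
    (hz : ∀ m : Fin 3 →₀ ℕ, m 2 ≠ 0 → q.coeff m = 0)
    (hq0 : q.coeff (Finsupp.single 0 k) = 1)
    (hq1 : q.coeff (Finsupp.single 0 (k - 1) + Finsupp.single 1 1) = a)
    (hc : q.coeff (Finsupp.single 0 (k - 2) + Finsupp.single 1 2) = c) :
    coeff (Finsupp.single 0 k + Finsupp.single 1 2 + Finsupp.single 2 2)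
      (Pbt b t * q) = b ^ 2 + a * t + c := by
  rw [Pbt_eq, add_mul, add_mul, add_mul, add_mul, add_mul]
  simp only [coeff_add, coeff_monomial_mul']
  have c1 : (Finsupp.single (0:Fin 3) 2 + Finsupp.single 1 2) ≤
      Finsupp.single 0 k + Finsupp.single 1 2 + Finsupp.single 2 2 := by
    rw [Finsupp.le_def]; intro k'; fin_cases k' <;>
      simp (config := { decide := true }) [Finsupp.add_apply, Finsupp.single_apply] <;> omega
  have e1 : (Finsupp.single (0:Fin 3) k + Finsupp.single 1 2 + Finsupp.single 2 2) -
      (Finsupp.single 0 2 + Finsupp.single 1 2) =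
      Finsupp.single 0 (k-2) + Finsupp.single 2 2 := by
    ext k'; fin_cases k' <;>
      simp (config := { decide := true })
        [Finsupp.tsub_apply, Finsupp.add_apply, Finsupp.single_apply] <;> omega
  have z1 : q.coeff (Finsupp.single 0 (k-2) + Finsupp.single 2 2) = 0 := by
    apply hz
    simp (config := { decide := true }) [Finsupp.add_apply, Finsupp.single_apply]
  rw [if_pos c1, e1, z1]
  have c2 : (Finsupp.single (0:Fin 3) 2 + Finsupp.single 1 1 + Finsupp.single 2 1) ≤
      Finsupp.single 0 k + Finsupp.single 1 2 + Finsupp.single 2 2 := by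
    rw [Finsupp.le_def]; intro k'; fin_cases k' <;>
      simp (config := { decide := true }) [Finsupp.add_apply, Finsupp.single_apply] <;> omega
  have e2 : (Finsupp.single (0:Fin 3) k + Finsupp.single 1 2 + Finsupp.single 2 2) -
      (Finsupp.single 0 2 + Finsupp.single 1 1 + Finsupp.single 2 1) =
      Finsupp.single 0 (k-2) + Finsupp.single 1 1 + Finsupp.single 2 1 := by
    ext k'; fin_cases k' <;>
      simp (config := { decide := true })
        [Finsupp.tsub_apply, Finsupp.add_apply, Finsupp.single_apply] <;> omega
  have z2 : q.coeff (Finsupp.single 0 (k-2) + Finsupp.single 1 1 + Finsupp.single 2 1) = 0 := by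
    apply hz
    simp (config := { decide := true }) [Finsupp.add_apply, Finsupp.single_apply]
  rw [if_pos c2, e2, z2]
  have c3 : (Finsupp.single (0:Fin 3) 2 + Finsupp.single 2 2) ≤
      Finsupp.single 0 k + Finsupp.single 1 2 + Finsupp.single 2 2 := by
    rw [Finsupp.le_def]; intro k'; fin_cases k' <;>
      simp (config := { decide := true }) [Finsupp.add_apply, Finsupp.single_apply] <;> omega
  have e3 : (Finsupp.single (0:Fin 3) k + Finsupp.single 1 2 + Finsupp.single 2 2) -
      (Finsupp.single 0 2 + Finsupp.single 2 2) =
      Finsupp.single 0 (k-2) + Finsupp.single 1 2 := by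
    ext k'; fin_cases k' <;>
      simp (config := { decide := true })
        [Finsupp.tsub_apply, Finsupp.add_apply, Finsupp.single_apply] <;> omega
  rw [if_pos c3, e3, hc]
  have c4 : (Finsupp.single (0:Fin 3) 1 + Finsupp.single 1 2 + Finsupp.single 2 1) ≤
      Finsupp.single 0 k + Finsupp.single 1 2 + Finsupp.single 2 2 := by
    rw [Finsupp.le_def]; intro k'; fin_cases k' <;>
      simp (config := { decide := true }) [Finsupp.add_apply, Finsupp.single_apply] <;> omega
  have e4 : (Finsupp.single (0:Fin 3) k + Finsupp.single 1 2 + Finsupp.single 2 2) -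
      (Finsupp.single 0 1 + Finsupp.single 1 2 + Finsupp.single 2 1) =
      Finsupp.single 0 (k-1) + Finsupp.single 2 1 := by
    ext k'; fin_cases k' <;>
      simp (config := { decide := true })
        [Finsupp.tsub_apply, Finsupp.add_apply, Finsupp.single_apply] <;> omega
  have z4 : q.coeff (Finsupp.single 0 (k-1) + Finsupp.single 2 1) = 0 := by
    apply hz
    simp (config := { decide := true }) [Finsupp.add_apply, Finsupp.single_apply]
  rw [if_pos c4, e4, z4]
  have c5 : (Finsupp.single (1:Fin 3) 2 + Finsupp.single 2 2) ≤
      Finsupp.single 0 k + Finsupp.single 1 2 + Finsupp.single 2 2 := by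
    rw [Finsupp.le_def]; intro k'; fin_cases k' <;>
      simp (config := { decide := true }) [Finsupp.add_apply, Finsupp.single_apply] <;> omega
  have e5 : (Finsupp.single (0:Fin 3) k + Finsupp.single 1 2 + Finsupp.single 2 2) -
      (Finsupp.single 1 2 + Finsupp.single 2 2) = Finsupp.single 0 k := by
    ext k'; fin_cases k' <;>
      simp (config := { decide := true })
        [Finsupp.tsub_apply, Finsupp.add_apply, Finsupp.single_apply] <;> omega
  rw [if_pos c5, e5, hq0]
  have c6 : (Finsupp.single (0:Fin 3) 1 + Finsupp.single 1 1 + Finsupp.single 2 2) ≤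
      Finsupp.single 0 k + Finsupp.single 1 2 + Finsupp.single 2 2 := by
    rw [Finsupp.le_def]; intro k'; fin_cases k' <;>
      simp (config := { decide := true }) [Finsupp.add_apply, Finsupp.single_apply] <;> omega
  have e6 : (Finsupp.single (0:Fin 3) k + Finsupp.single 1 2 + Finsupp.single 2 2) -
      (Finsupp.single 0 1 + Finsupp.single 1 1 + Finsupp.single 2 2) =
      Finsupp.single 0 (k-1) + Finsupp.single 1 1 := by
    ext k'; fin_cases k' <;>
      simp (config := { decide := true })
        [Finsupp.tsub_apply, Finsupp.add_apply, Finsupp.single_apply] <;> omega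
  rw [if_pos c6, e6, hq1]
  ring

end Coeffs

lemma coeffZ_of_eq (h : MvPolynomial (Fin 3) ℝ) (nu : Fin 3 → ℤ) (m : Fin 3 →₀ ℕ)
    (hm : ∀ k', (m k' : ℤ) = nu k') : coeffZ h nu = h.coeff m := by
  unfold coeffZ
  rw [dif_pos (fun k' => by rw [← hm k']; exact Int.natCast_nonneg _)]
  congr 1
  ext k'
  simp only [Finsupp.coe_equivFunOnFinite_symm]
  have := hm k'
  omega

/-- For `t > 2b + a`, the ADLC polynomial
`p_{b,t} = b²x²y² + bx²yz + x²z² + b²xy²z + b²y²z² + txyz²` times any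
homogeneous `q(x,y) = x^k + a x^{k-1}y + c x^{k-2}y² + ⋯` (with `c ≥ 0`) is
not ADLC: the coefficients of `x^{k+2}y²`, `x^{k+1}y²z`, `x^k y²z²` in
`p_{b,t}·q` are `b²`, `b²+ab`, `b²+at+c`, and `(b²+ab)² < b²·(b²+at+c)`. -/
theorem pbt_times_q_not_ADLC (a b t : ℝ) (ha : 0 < a) (hb : 0 < b)
    (ht : 2 * b + a < t) (k : ℕ) (hk : 2 ≤ k)
    (q : MvPolynomial (Fin 3) ℝ) (hqhom : q.IsHomogeneous k)
    (hqxy : ∀ mu : Fin 3 →₀ ℕ, q.coeff mu ≠ 0 → mu 2 = 0)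
    (hq0 : q.coeff (Finsupp.single 0 k) = 1)
    (hq1 : q.coeff (Finsupp.single 0 (k - 1) + Finsupp.single 1 1) = a)
    (c : ℝ) (hc : q.coeff (Finsupp.single 0 (k - 2) + Finsupp.single 1 2) = c)
    (hc0 : 0 ≤ c) :
    let p : MvPolynomial (Fin 3) ℝ :=
      C (b ^ 2) * X 0 ^ 2 * X 1 ^ 2 + C b * X 0 ^ 2 * X 1 * X 2 +
        X 0 ^ 2 * X 2 ^ 2 + C (b ^ 2) * X 0 * X 1 ^ 2 * X 2 +
        C (b ^ 2) * X 1 ^ 2 * X 2 ^ 2 + C t * X 0 * X 1 * X 2 ^ 2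
    ADLC p ∧ ¬ ADLC (p * q) ∧
    (p * q).coeff (Finsupp.single 0 (k + 2) + Finsupp.single 1 2) = b ^ 2 ∧
    (p * q).coeff (Finsupp.single 0 (k + 1) + Finsupp.single 1 2 + Finsupp.single 2 1)
      = b ^ 2 + a * b ∧
    (p * q).coeff (Finsupp.single 0 k + Finsupp.single 1 2 + Finsupp.single 2 2)
      = b ^ 2 + a * t + c ∧
    (b ^ 2 + a * b) ^ 2 < b ^ 2 * (b ^ 2 + a * t + c) := by
  intro p
  have hz : ∀ m : Fin 3 →₀ ℕ, m 2 ≠ 0 → q.coeff m = 0 := by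
    intro m hm; by_contra h; exact hm (hqxy m h)
  have hpP : p = Pbt b t := rfl
  have h1 : (p * q).coeff (Finsupp.single 0 (k + 2) + Finsupp.single 1 2) = b ^ 2 := by
    rw [hpP]; exact coeff_mul_one b t k q hk hz hq0
  have h2 : (p * q).coeff (Finsupp.single 0 (k + 1) + Finsupp.single 1 2 + Finsupp.single 2 1)
      = b ^ 2 + a * b := by
    rw [hpP]; exact coeff_mul_two b t k q hk a hz hq0 hq1
  have h3 : (p * q).coeff (Finsupp.single 0 k + Finsupp.single 1 2 + Finsupp.single 2 2)
      = b ^ 2 + a * t + c := by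
    rw [hpP]; exact coeff_mul_three b t k q hk a c hz hq0 hq1 hc
  have hineq : (b ^ 2 + a * b) ^ 2 < b ^ 2 * (b ^ 2 + a * t + c) := by
    nlinarith [mul_pos (mul_pos hb hb) (mul_pos ha (by linarith : (0:ℝ) < t - 2*b - a)),
      mul_nonneg (mul_pos hb hb).le hc0]
  refine ⟨?_, ?_, h1, h2, h3, hineq⟩
  · rw [hpP]
    exact ADLC_Pbt b t hb (by linarith)
  · intro hA
    have H := hA ![k+1, 2, 1] 0 2
    have hv1 : coeffZ (p * q)
        ((fun k' => ((![k+1, 2, 1] : Fin 3 → ℕ) k' : ℤ)) + Pi.single 0 1 - Pi.single 2 1)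
        = b ^ 2 := by
      rw [coeffZ_of_eq (p * q) _ (Finsupp.single 0 (k + 2) + Finsupp.single 1 2) (by
        intro k'; fin_cases k' <;>
          simp (config := { decide := true })
            [Pi.single_apply, Finsupp.add_apply, Finsupp.single_apply] <;>
          omega)]
      exact h1
    have hv2 : coeffZ (p * q)
        ((fun k' => ((![k+1, 2, 1] : Fin 3 → ℕ) k' : ℤ)) - Pi.single 0 1 + Pi.single 2 1)
        = b ^ 2 + a * t + c := by
      rw [coeffZ_of_eq (p * q) _
        (Finsupp.single 0 k + Finsupp.single 1 2 + Finsupp.single 2 2) (by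
        intro k'; fin_cases k' <;>
          simp (config := { decide := true })
            [Pi.single_apply, Finsupp.add_apply, Finsupp.single_apply] <;>
          omega)]
      exact h3
    have e2 : Finsupp.equivFunOnFinite.symm ![k+1, 2, 1] =
        Finsupp.single (0 : Fin 3) (k + 1) + Finsupp.single 1 2 + Finsupp.single 2 1 := by
      ext k'; fin_cases k' <;>
        simp (config := { decide := true })
          [Finsupp.add_apply, Finsupp.single_apply]
    rw [hv1, hv2, e2, h2] at H
    nlinarith [H, hineq]
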